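/- Let p ∈ ℝ[x₁,…,xₙ] be a real zero polynomial, i.e., p(0) ≠ 0 and for every a ∈ ℝⁿ the univariate polynomial t ↦ p(ta) has only real roots (over ℂ). Let x₀ ∈ ℝⁿ be a point in the connected component of 0 in {x : p(x) ≠ 0}. Then the translated polynomial q(x) := p(x + x₀) is again a real zero polynomial, and the connected component of 0 in {x : q(x) ≠ 0} equals the translate by −x₀ of the connected component of 0 in {x : p(x) ≠ 0}. -/

import Mathlib

open MvPolynomial

/-- The restriction of `p` to the line through the origin with direction `a`,
as a univariate polynomial in `t`. -/
noncomputable def lineRestrict {n : ℕ} (p : MvPolynomial (Fin n) ℝ) (a : Fin n → ℝ) :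
    Polynomial ℝ :=
  MvPolynomial.aeval (fun i => Polynomial.C (a i) * Polynomial.X) p

/-- `p` is a real zero polynomial: `p(0) ≠ 0` and every complex root of every
line restriction through the origin is real. -/
def IsRealZero {n : ℕ} (p : MvPolynomial (Fin n) ℝ) : Prop :=
  MvPolynomial.eval 0 p ≠ 0 ∧
    ∀ a : Fin n → ℝ, ∀ z : ℂ, Polynomial.aeval z (lineRestrict p a) = 0 → z.im = 0



open Polynomial Finset

private lemma multiset_pow_le_norm_prod (ε : ℝ) (hε : 0 ≤ ε) (s : Multiset ℂ)
    (h : ∀ z ∈ s, ε ≤ ‖z‖) : ε ^ Multiset.card s ≤ ‖s.prod‖ := by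
  induction s using Multiset.induction_on with
  | empty => simp
  | cons a s ih =>
    have ha : ε ≤ ‖a‖ := h a (Multiset.mem_cons_self a s)
    have ihs : ε ^ Multiset.card s ≤ ‖s.prod‖ :=
      ih (fun z hz => h z (Multiset.mem_cons_of_mem hz))
    simp only [Multiset.prod_cons, Multiset.card_cons, pow_succ, norm_mul]
    calc ε ^ Multiset.card s * ε ≤ ‖s.prod‖ * ‖a‖ :=
          mul_le_mul ihs ha hε (le_trans (pow_nonneg hε _) ihs)
      _ = ‖a‖ * ‖s.prod‖ := mul_comm _ _

/-- NEAR: if all roots of `F` are at distance `≥ ε` from `z₀`, then `|F(z₀)|` is big. -/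
private lemma near_bound (F : Polynomial ℂ) (hF : F ≠ 0) (z₀ : ℂ) (ε : ℝ) (hε : 0 ≤ ε)
    (h : ∀ z ∈ F.roots, ε ≤ ‖z₀ - z‖) :
    ‖F.leadingCoeff‖ * ε ^ F.natDegree ≤ ‖F.eval z₀‖ := by
  have hsplit : F.Splits := IsAlgClosed.splits F
  have hcard : Multiset.card F.roots = F.natDegree :=
    (splits_iff_card_roots).mp hsplit
  have hprod := hsplit.eq_prod_roots
  have heval : F.eval z₀ = F.leadingCoeff * ((F.roots.map fun a => z₀ - a)).prod := by
    conv_lhs => rw [hprod]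
    rw [Polynomial.eval_mul, Polynomial.eval_C, Polynomial.eval_multiset_prod]
    congr 2
    rw [Multiset.map_map]
    congr 1
    funext a
    simp
  rw [heval, norm_mul]
  have : ε ^ F.natDegree ≤ ‖((F.roots.map fun a => z₀ - a)).prod‖ := by
    have := multiset_pow_le_norm_prod ε hε (F.roots.map fun a => z₀ - a) (by
      intro z hz
      obtain ⟨a, ha, rfl⟩ := Multiset.mem_map.mp hz
      exact h a ha)
    rwa [Multiset.card_map, hcard] at this
  exact mul_le_mul_of_nonneg_left this (norm_nonneg _)

/-- Cauchy bound on roots. -/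
private lemma root_bound (F : Polynomial ℂ) (D : ℕ) (hd : F.natDegree = D)
    (M : ℝ) (hM : ∀ k, k < D → ‖F.coeff k‖ ≤ M) (z : ℂ) (hz : F.eval z = 0)
    (hc0 : F.coeff D ≠ 0) :
    ‖z‖ ≤ max 1 (D * M / ‖F.coeff D‖) := by
  rcases le_or_gt ‖z‖ 1 with h1 | h1
  · exact le_trans h1 (le_max_left _ _)
  · refine le_trans ?_ (le_max_right _ _)
    have hev : F.eval z = ∑ k ∈ range (D + 1), F.coeff k * z ^ k := by
      rw [eval_eq_sum_range' (by omega : F.natDegree < D + 1)]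
    rw [hev, Finset.sum_range_succ] at hz
    have key : F.coeff D * z ^ D = -∑ k ∈ range D, F.coeff k * z ^ k := by
      linear_combination hz
    have hnorm : ‖F.coeff D‖ * ‖z‖ ^ D ≤ D * M * ‖z‖ ^ (D - 1) := by
      calc ‖F.coeff D‖ * ‖z‖ ^ D = ‖F.coeff D * z ^ D‖ := by
            rw [norm_mul, norm_pow]
        _ = ‖∑ k ∈ range D, F.coeff k * z ^ k‖ := by rw [key, norm_neg]
        _ ≤ ∑ k ∈ range D, ‖F.coeff k * z ^ k‖ := norm_sum_le _ _
        _ ≤ ∑ k ∈ range D, M * ‖z‖ ^ (D - 1) := by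
            refine Finset.sum_le_sum fun k hk => ?_
            rw [norm_mul, norm_pow]
            exact mul_le_mul (hM k (Finset.mem_range.mp hk))
              (pow_le_pow_right₀ (le_of_lt h1) (by have := Finset.mem_range.mp hk; omega))
              (pow_nonneg (norm_nonneg z) k) (le_trans (norm_nonneg _) (hM k (Finset.mem_range.mp hk)))
        _ = D * M * ‖z‖ ^ (D - 1) := by rw [Finset.sum_const, Finset.card_range]; ring
    rcases Nat.eq_zero_or_pos D with hD | hD
    · subst hD
      simp at key
      exact absurd key hc0
    · have hzD : ‖z‖ ^ D = ‖z‖ * ‖z‖ ^ (D - 1) := by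
        conv_lhs => rw [show D = 1 + (D - 1) by omega]
        rw [pow_add, pow_one]
      rw [hzD, ← mul_assoc] at hnorm
      have hpow : (0:ℝ) < ‖z‖ ^ (D - 1) := pow_pos (by linarith) _
      have h2 : ‖F.coeff D‖ * ‖z‖ ≤ D * M := le_of_mul_le_mul_right hnorm hpow
      have hc : (0:ℝ) < ‖F.coeff D‖ := norm_pos_iff.mpr hc0
      rw [le_div_iff₀ hc]
      calc ‖z‖ * ‖F.coeff D‖ = ‖F.coeff D‖ * ‖z‖ := mul_comm _ _
        _ ≤ D * M := h2

namespace RZAux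

variable {n : ℕ}

/-- evaluation of `p` at a complex point. -/
noncomputable def E (p : MvPolynomial (Fin n) ℝ) (v : Fin n → ℂ) : ℂ :=
  MvPolynomial.aeval v p

lemma E_ofReal (p : MvPolynomial (Fin n) ℝ) (v : Fin n → ℝ) :
    E p (fun i => (v i : ℂ)) = ((MvPolynomial.eval v p : ℝ) : ℂ) := by
  have h1 : (Complex.ofRealAm).comp (MvPolynomial.aeval v) =
      MvPolynomial.aeval (fun i => ((v i : ℝ) : ℂ)) := by
    rw [MvPolynomial.comp_aeval]
    rfl
  have h2 := AlgHom.congr_fun h1 p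
  simp only [AlgHom.comp_apply, Complex.ofRealAm_coe] at h2
  rw [E, ← h2]
  congr 1

noncomputable def gP (p : MvPolynomial (Fin n) ℝ) (x d a : Fin n → ℝ) :
    Polynomial (Polynomial ℝ) :=
  MvPolynomial.aeval (fun i => Polynomial.C (Polynomial.C (x i)) +
    Polynomial.C (Polynomial.C (d i)) * Polynomial.X +
    Polynomial.C (Polynomial.C (a i) * Polynomial.X)) p

noncomputable def bc (p : MvPolynomial (Fin n) ℝ) (x d a : Fin n → ℝ) (j k : ℕ) : ℝ :=
  (((gP p x d a).coeff j).coeff k)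

noncomputable def DD (p : MvPolynomial (Fin n) ℝ) (x d a : Fin n → ℝ) : ℕ :=
  (gP p x d a).natDegree +
    (Finset.range ((gP p x d a).natDegree + 1)).sup (fun j => ((gP p x d a).coeff j).natDegree)

variable (p : MvPolynomial (Fin n) ℝ) (x d a : Fin n → ℝ)

lemma natDegree_gP_le : (gP p x d a).natDegree ≤ DD p x d a := Nat.le_add_right _ _

lemma natDegree_coeff_gP_le (j : ℕ) : ((gP p x d a).coeff j).natDegree ≤ DD p x d a := by
  rcases le_or_gt j ((gP p x d a).natDegree) with h | h
  · exact le_trans (Finset.le_sup (f := fun j => ((gP p x d a).coeff j).natDegree)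
      (Finset.mem_range_succ_iff.mpr h)) (Nat.le_add_left _ _)
  · rw [coeff_eq_zero_of_natDegree_lt h]
    simp
  
lemma bc_support (j k : ℕ) (h : bc p x d a j k ≠ 0) : j + k ≤ DD p x d a := by
  have hj : j ≤ (gP p x d a).natDegree := by
    by_contra hc
    rw [bc, coeff_eq_zero_of_natDegree_lt (p := gP p x d a) (n := j) (by omega)] at h
    simp at h
  have hk : k ≤ ((gP p x d a).coeff j).natDegree :=
    le_natDegree_of_ne_zero h
  have : ((gP p x d a).coeff j).natDegree ≤
      (Finset.range ((gP p x d a).natDegree + 1)).sup (fun j => ((gP p x d a).coeff j).natDegree) :=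
    Finset.le_sup (f := fun j => ((gP p x d a).coeff j).natDegree)
      (Finset.mem_range_succ_iff.mpr hj)
  rw [DD]; omega

lemma bridge (u w : ℂ) :
    E p (fun i => (x i : ℂ) + (d i : ℂ) * u + (a i : ℂ) * w) =
      ∑ j ∈ range (DD p x d a + 1), ∑ k ∈ range (DD p x d a + 1),
        (bc p x d a j k : ℂ) * u ^ j * w ^ k := by
  set D := DD p x d a with hD
  set ψ : Polynomial ℝ →ₐ[ℝ] ℂ := Polynomial.aeval w with hψ
  set φ : Polynomial (Polynomial ℝ) →ₐ[ℝ] ℂ :=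
    ((Polynomial.aeval u : Polynomial ℂ →ₐ[ℂ] ℂ).restrictScalars ℝ).comp
      (Polynomial.mapAlgHom ψ) with hφ
  have h1 : φ (gP p x d a) =
      E p (fun i => (x i : ℂ) + (d i : ℂ) * u + (a i : ℂ) * w) := by
    rw [gP]
    have := AlgHom.congr_fun (MvPolynomial.comp_aeval
      (f := fun i => Polynomial.C (Polynomial.C (x i)) +
        Polynomial.C (Polynomial.C (d i)) * Polynomial.X +
        Polynomial.C (Polynomial.C (a i) * Polynomial.X)) φ) p
    rw [AlgHom.comp_apply] at this
    rw [this, E]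
    have hgen : (fun i => φ (Polynomial.C (Polynomial.C (x i)) +
        Polynomial.C (Polynomial.C (d i)) * Polynomial.X +
        Polynomial.C (Polynomial.C (a i) * Polynomial.X))) =
        fun i => (x i : ℂ) + (d i : ℂ) * u + (a i : ℂ) * w := by
      funext i
      simp [hφ, hψ, Polynomial.coe_mapAlgHom, Polynomial.map_add, Polynomial.map_mul]
    rw [hgen]
  rw [← h1]
  have h2 : φ (gP p x d a) = eval u (Polynomial.map (ψ : Polynomial ℝ →+* ℂ) (gP p x d a)) := by
    simp [hφ, Polynomial.coe_mapAlgHom]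
  rw [h2, Polynomial.eval_map, eval₂_eq_sum_range' (ψ : Polynomial ℝ →+* ℂ)
    (Nat.lt_succ_of_le (natDegree_gP_le p x d a)) u]
  refine Finset.sum_congr rfl fun j _ => ?_
  have h3 : (ψ : Polynomial ℝ →+* ℂ) ((gP p x d a).coeff j) =
      ∑ k ∈ range (D + 1), (bc p x d a j k : ℂ) * w ^ k := by
    show ψ ((gP p x d a).coeff j) = _
    rw [hψ, Polynomial.aeval_eq_sum_range' (Nat.lt_succ_of_le (natDegree_coeff_gP_le p x d a j))]
    rfl
  rw [h3, Finset.sum_mul]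
  refine Finset.sum_congr rfl fun k _ => ?_
  ring

attribute [irreducible] gP bc DD

namespace Fam

variable {p : MvPolynomial (Fin n) ℝ} {x d a : Fin n → ℝ}

noncomputable def WW (p : MvPolynomial (Fin n) ℝ) (x d a : Fin n → ℝ) (c : ℂ) (σ : ℝ) :
    Polynomial ℂ :=
  ∑ j ∈ range (DD p x d a + 1), ∑ k ∈ range (DD p x d a + 1),
    Polynomial.C ((bc p x d a j k : ℂ) * (σ : ℂ) ^ k) *
      (Polynomial.X ^ j * (Polynomial.X + Polynomial.C c) ^ (DD p x d a - j - k))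

lemma eval_WW (c : ℂ) (σ : ℝ) (z : ℂ) :
    (WW p x d a c σ).eval z =
      ∑ j ∈ range (DD p x d a + 1), ∑ k ∈ range (DD p x d a + 1),
        (bc p x d a j k : ℂ) * (σ : ℂ) ^ k * (z ^ j * (z + c) ^ (DD p x d a - j - k)) := by
  simp [WW, eval_finset_sum]

lemma monic_M (j k : ℕ) (c : ℂ) :
    ((Polynomial.X ^ j * (Polynomial.X + Polynomial.C c) ^ (DD p x d a - j - k)) : Polynomial ℂ).Monic :=
  (monic_X_pow j).mul ((monic_X_add_C c).pow _)

lemma natDegree_M (j k : ℕ) (c : ℂ) :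
    ((Polynomial.X ^ j * (Polynomial.X + Polynomial.C c) ^ (DD p x d a - j - k)) : Polynomial ℂ).natDegree
      = j + (DD p x d a - j - k) := by
  rw [(monic_X_pow j).natDegree_mul ((monic_X_add_C c).pow _), natDegree_X_pow,
    natDegree_pow, natDegree_X_add_C, mul_one]

lemma coeff_WW (c : ℂ) (σ : ℝ) (m : ℕ) :
    (WW p x d a c σ).coeff m =
      ∑ j ∈ range (DD p x d a + 1), ∑ k ∈ range (DD p x d a + 1),
        (bc p x d a j k : ℂ) * (σ : ℂ) ^ k *
          ((Polynomial.X ^ j * (Polynomial.X + Polynomial.C c) ^ (DD p x d a - j - k)) : Polynomial ℂ).coeff m := by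
  rw [WW, finset_sum_coeff]
  refine Finset.sum_congr rfl fun j _ => ?_
  rw [finset_sum_coeff]
  refine Finset.sum_congr rfl fun k _ => ?_
  rw [Polynomial.coeff_C_mul]

lemma sum_b0 : ∑ j ∈ range (DD p x d a + 1), ((bc p x d a j 0 : ℂ)) =
    ((MvPolynomial.eval (fun i => x i + d i) p : ℝ) : ℂ) := by
  have hb := bridge p x d a 1 0
  have hE : E p (fun i => (x i : ℂ) + (d i : ℂ) * 1 + (a i : ℂ) * 0) =
      ((MvPolynomial.eval (fun i => x i + d i) p : ℝ) : ℂ) := by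
    rw [show (fun i => (x i : ℂ) + (d i : ℂ) * 1 + (a i : ℂ) * 0) =
      (fun i => ((x i + d i : ℝ) : ℂ)) from funext fun i => by push_cast; ring]
    exact E_ofReal p _
  rw [hE] at hb
  rw [hb]
  refine Finset.sum_congr rfl fun j _ => ?_
  rw [Finset.sum_eq_single 0 (fun k _ hk => by simp [zero_pow hk]) (fun h => by simp at h)]
  simp

lemma coeff_WW_D (c : ℂ) (σ : ℝ) :
    (WW p x d a c σ).coeff (DD p x d a) = ((MvPolynomial.eval (fun i => x i + d i) p : ℝ) : ℂ) := by
  rw [coeff_WW, ← sum_b0 (p := p) (x := x) (d := d) (a := a)]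
  refine Finset.sum_congr rfl fun j hj => ?_
  have hjD : j ≤ DD p x d a := Finset.mem_range_succ_iff.mp hj
  have hside : ∀ k ∈ range (DD p x d a + 1), k ≠ 0 →
      (bc p x d a j k : ℂ) * (σ : ℂ) ^ k *
        ((Polynomial.X ^ j * (Polynomial.X + Polynomial.C c) ^ (DD p x d a - j - k)) : Polynomial ℂ).coeff (DD p x d a) = 0 := by
    intro k _ hk
    by_cases hb : bc p x d a j k = 0
    · simp [hb]
    · have hjk := bc_support p x d a j k hb
      have hz : ((Polynomial.X ^ j * (Polynomial.X + Polynomial.C c) ^ (DD p x d a - j - k)) : Polynomial ℂ).coeff (DD p x d a) = 0 := by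
        apply coeff_eq_zero_of_natDegree_lt
        rw [natDegree_M]
        omega
      rw [hz, mul_zero]
  rw [Finset.sum_eq_single 0 hside (fun h => by simp at h)]
  have hdeg : ((Polynomial.X ^ j * (Polynomial.X + Polynomial.C c) ^ (DD p x d a - j - 0)) : Polynomial ℂ).natDegree = DD p x d a := by
    rw [natDegree_M]; omega
  have h1 : ((Polynomial.X ^ j * (Polynomial.X + Polynomial.C c) ^ (DD p x d a - j - 0)) : Polynomial ℂ).coeff (DD p x d a) = 1 := by
    have hm := (monic_M (p := p) (x := x) (d := d) (a := a) j 0 c).coeff_natDegree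
    rw [hdeg] at hm
    exact hm
  rw [h1]
  simp

lemma coeff_WW_gt (c : ℂ) (σ : ℝ) (m : ℕ) (hm : DD p x d a < m) :
    (WW p x d a c σ).coeff m = 0 := by
  rw [coeff_WW]
  refine Finset.sum_eq_zero fun j hj => Finset.sum_eq_zero fun k _ => ?_
  have hjD : j ≤ DD p x d a := Finset.mem_range_succ_iff.mp hj
  have : ((Polynomial.X ^ j * (Polynomial.X + Polynomial.C c) ^ (DD p x d a - j - k)) : Polynomial ℂ).coeff m = 0 := by
    apply coeff_eq_zero_of_natDegree_lt
    rw [natDegree_M]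
    omega
  rw [this, mul_zero]

variable (hc0 : MvPolynomial.eval (fun i => x i + d i) p ≠ 0)
include hc0

lemma natDegree_WW (c : ℂ) (σ : ℝ) : (WW p x d a c σ).natDegree = DD p x d a := by
  refine le_antisymm (natDegree_le_iff_coeff_eq_zero.mpr fun m hm => coeff_WW_gt c σ m hm) ?_
  apply le_natDegree_of_ne_zero
  rw [coeff_WW_D c σ]
  exact_mod_cast hc0

lemma leadingCoeff_WW (c : ℂ) (σ : ℝ) :
    (WW p x d a c σ).leadingCoeff = ((MvPolynomial.eval (fun i => x i + d i) p : ℝ) : ℂ) := by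
  rw [leadingCoeff, natDegree_WW hc0, coeff_WW_D]

lemma WW_ne_zero (c : ℂ) (σ : ℝ) : WW p x d a c σ ≠ 0 := by
  intro h
  have := coeff_WW_D (p := p) (x := x) (d := d) (a := a) c σ
  rw [h] at this
  simp at this
  exact hc0 (by exact_mod_cast this.symm)

end Fam
end RZAux

-- stage 4 draft (appended later to main file)
section Seg
open Complex Polynomial Finset RZAux RZAux.Fam

variable {n : ℕ} {p : MvPolynomial (Fin n) ℝ} {x d a : Fin n → ℝ}

variable (hRZ : ∀ (v : Fin n → ℝ) (z : ℂ), z.im ≠ 0 →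
    E p (fun i => (x i : ℂ) + z * (v i : ℂ)) ≠ 0)
variable (hseg : ∀ μ : ℝ, 0 ≤ μ → μ ≤ 1 → MvPolynomial.eval (fun i => x i + μ * d i) p ≠ 0)

section wD
local notation "D" => DD p x d a

include hseg in
lemma hc0' : MvPolynomial.eval (fun i => x i + d i) p ≠ 0 := by
  have := hseg 1 zero_le_one le_rfl
  simpa using this

include hRZ in
lemma barrier (σ τ : ℝ) : (WW p x d a Complex.I σ).eval (τ : ℂ) ≠ 0 := by
  have hτI : ((τ : ℂ) + Complex.I) ≠ 0 := by
    intro h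
    have := congrArg Complex.im h
    simp at this
  set ω : ℂ := ((τ : ℂ) + Complex.I)⁻¹ with hω
  have key : ((τ : ℂ) + Complex.I) ^ D *
      E p (fun i => (x i : ℂ) + (d i : ℂ) * ((τ : ℂ) * ω) + (a i : ℂ) * ((σ : ℂ) * ω)) =
      (WW p x d a Complex.I σ).eval (τ : ℂ) := by
    rw [bridge, eval_WW, Finset.mul_sum]
    refine Finset.sum_congr rfl fun j hj => ?_
    rw [Finset.mul_sum]
    refine Finset.sum_congr rfl fun k hk => ?_
    by_cases hb : bc p x d a j k = 0
    · simp [hb]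
    · have hjk := bc_support p x d a j k hb
      have hsplit : ((τ : ℂ) + Complex.I) ^ D =
          ((τ : ℂ) + Complex.I) ^ j * ((τ : ℂ) + Complex.I) ^ k *
            ((τ : ℂ) + Complex.I) ^ (D - j - k) := by
        rw [← pow_add, ← pow_add]
        congr 1
        omega
      rw [hsplit, hω]
      field_simp
      simp only [div_pow]; field_simp
  intro h0
  rw [← key] at h0
  have hE0 : E p (fun i => (x i : ℂ) + (d i : ℂ) * ((τ : ℂ) * ω) + (a i : ℂ) * ((σ : ℂ) * ω)) = 0 := by
    rcases mul_eq_zero.mp h0 with h | h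
    · exact absurd h (pow_ne_zero _ hτI)
    · exact h
  have hωim : ω.im ≠ 0 := by
    rw [hω, Complex.inv_im]
    have h1 : ((τ : ℂ) + Complex.I).im = 1 := by simp
    rw [h1]
    have hns : Complex.normSq ((τ : ℂ) + Complex.I) ≠ 0 := by
      rwa [Ne, Complex.normSq_eq_zero]
    exact div_ne_zero (by norm_num) hns
  refine hRZ (fun i => τ * d i + σ * a i) ω hωim ?_
  rw [← hE0]
  congr 1
  funext i
  push_cast
  ring

include hRZ hseg in
lemma anchor (z : ℂ) (hz : (WW p x d a Complex.I 0).eval z = 0) : z.im < 0 := by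
  by_cases hzI : z = -Complex.I
  · rw [hzI]
    simp
  · have hτI : z + Complex.I ≠ 0 := fun h => hzI (by linear_combination h)
    set u : ℂ := z * (z + Complex.I)⁻¹ with hu
    have key : (z + Complex.I) ^ D *
        E p (fun i => (x i : ℂ) + (d i : ℂ) * u + (a i : ℂ) * ((0 : ℝ) * (z + Complex.I)⁻¹)) =
        (WW p x d a Complex.I 0).eval z := by
      rw [bridge, eval_WW, Finset.mul_sum]
      refine Finset.sum_congr rfl fun j hj => ?_
      rw [Finset.mul_sum]
      refine Finset.sum_congr rfl fun k hk => ?_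
      by_cases hb : bc p x d a j k = 0
      · simp [hb]
      · by_cases hk0 : k = 0
        · subst hk0
          have hjk := bc_support p x d a j 0 hb
          have hsplit : (z + Complex.I) ^ D =
              (z + Complex.I) ^ j * (z + Complex.I) ^ (D - j - 0) := by
            rw [← pow_add]; congr 1; omega
          rw [hsplit, hu]
          field_simp
          simp only [div_pow]; field_simp
        · simp [zero_pow hk0]
    rw [← key] at hz
    have hE0 : E p (fun i => (x i : ℂ) + (d i : ℂ) * u + (a i : ℂ) * ((0 : ℝ) * (z + Complex.I)⁻¹)) = 0 := by
      rcases mul_eq_zero.mp hz with h | h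
      · exact absurd h (pow_ne_zero _ hτI)
      · exact h
    have him : u.im = 0 := by
      by_contra him
      refine hRZ d u him ?_
      rw [← hE0]
      congr 1
      funext i
      push_cast
      ring
    set μ : ℝ := u.re with hμ
    have huμ : u = (μ : ℂ) := by
      apply Complex.ext <;> simp [hμ, him]
    have hreal : MvPolynomial.eval (fun i => x i + μ * d i) p = 0 := by
      have h1 : E p (fun i => ((x i + μ * d i : ℝ) : ℂ)) = 0 := by
        rw [← hE0]
        congr 1
        funext i
        rw [huμ]
        push_cast
        ring
      rw [E_ofReal] at h1
      exact_mod_cast h1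
    have hμout : μ < 0 ∨ 1 < μ := by
      by_contra hcon
      push_neg at hcon
      exact hseg μ hcon.1 hcon.2 hreal
    have hμ1 : μ ≠ 1 := by rcases hμout with h | h <;> linarith
    have hz1 : (μ : ℂ) * (z + Complex.I) = z := by
      rw [← huμ, hu]
      field_simp
    have hz2 : z * (1 - (μ : ℂ)) = (μ : ℂ) * Complex.I := by
      linear_combination (-1 : ℂ) * hz1
    have h1μ : (1 : ℂ) - (μ : ℂ) ≠ 0 := by
      intro h
      apply hμ1
      have h2 : (μ : ℂ) = 1 := by linear_combination -h
      exact_mod_cast h2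
    have hzval : z = ((μ / (1 - μ) : ℝ) : ℂ) * Complex.I := by
      have h1μ' : (1 : ℝ) - μ ≠ 0 := fun h => hμ1 (by linarith)
      push_cast
      rw [div_mul_eq_mul_div, eq_div_iff h1μ]
      linear_combination hz2
    have him' : z.im = μ / (1 - μ) := by
      rw [hzval, Complex.mul_im, Complex.I_im, Complex.I_re, Complex.ofReal_re, Complex.ofReal_im]
      ring
    rw [him']
    rcases hμout with h | h
    · exact div_neg_of_neg_of_pos h (by linarith)
    · exact div_neg_of_pos_of_neg (by linarith) (by linarith)

include hRZ hseg in
lemma no_bad (σ : ℝ) (hσ : 0 ≤ σ) (z : ℂ) (hz : (WW p x d a Complex.I σ).eval z = 0) :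
    z.im < 0 := by
  have hC0 : MvPolynomial.eval (fun i => x i + d i) p ≠ 0 := hc0' hseg
  have hC0c : ((MvPolynomial.eval (fun i => x i + d i) p : ℝ) : ℂ) ≠ 0 := by exact_mod_cast hC0
  have hcoeff : ∀ m : ℕ, Continuous fun σ' : ℝ => (WW p x d a Complex.I σ').coeff m := by
    intro m
    simp only [coeff_WW]
    refine continuous_finset_sum _ fun j _ => continuous_finset_sum _ fun k _ => ?_
    exact (continuous_const.mul ((Complex.continuous_ofReal).pow k)).mul continuous_const
  set T : Set ℝ := {σ' | 0 ≤ σ' ∧ ∃ w : ℂ, (WW p x d a Complex.I σ').eval w = 0 ∧ 0 ≤ w.im}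
    with hT
  suffices hTe : T = ∅ by
    by_contra hcon
    push_neg at hcon
    have hmem : σ ∈ T := ⟨hσ, z, hz, hcon⟩
    rw [hTe] at hmem
    exact hmem
  have hopen : ∀ σ₀ ∈ T, ∃ δ > 0, ∀ σ', 0 ≤ σ' → |σ' - σ₀| < δ → σ' ∈ T := by
    intro σ₀ hσ₀
    obtain ⟨hσ₀0, z₀, hz₀, him0⟩ := hσ₀
    have himpos : 0 < z₀.im := by
      rcases lt_or_eq_of_le him0 with h | h
      · exact h
      · exfalso
        have hzr : z₀ = ((z₀.re : ℝ) : ℂ) := by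
          apply Complex.ext <;> simp [← h]
        exact barrier hRZ σ₀ z₀.re (by rw [← hzr]; exact hz₀)
    set ε := z₀.im / 2 with hε
    have hεpos : 0 < ε := by positivity
    set κ := ‖((MvPolynomial.eval (fun i => x i + d i) p : ℝ) : ℂ)‖ * ε ^ D with hκdef
    have hκ : 0 < κ := mul_pos (norm_pos_iff.mpr hC0c) (pow_pos hεpos _)
    have hcont : Continuous fun σ' : ℝ => (WW p x d a Complex.I σ').eval z₀ := by
      simp only [eval_WW]
      refine continuous_finset_sum _ fun j _ => continuous_finset_sum _ fun k _ => ?_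
      exact (continuous_const.mul ((Complex.continuous_ofReal).pow k)).mul continuous_const
    have htend0 : Filter.Tendsto (fun σ' : ℝ => ‖(WW p x d a Complex.I σ').eval z₀‖)
        (nhds σ₀) (nhds 0) := by
      have h3 := (hcont.norm).tendsto σ₀
      rwa [hz₀, norm_zero] at h3
    have hev : ∀ᶠ σ' in nhds σ₀, ‖(WW p x d a Complex.I σ').eval z₀‖ < κ :=
      htend0.eventually (gt_mem_nhds hκ)
    obtain ⟨δ, hδpos, hδ⟩ := Metric.eventually_nhds_iff.mp hev
    refine ⟨δ, hδpos, fun σ' hσ'0 hσ'δ => ?_⟩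
    by_contra hmem
    have hroots : ∀ w ∈ (WW p x d a Complex.I σ').roots, ε ≤ ‖z₀ - w‖ := by
      intro w hw
      have hwroot : (WW p x d a Complex.I σ').eval w = 0 :=
        (Polynomial.mem_roots (WW_ne_zero hC0 Complex.I σ')).mp hw
      have hwim : w.im < 0 := by
        by_contra hwim
        push_neg at hwim
        exact hmem ⟨hσ'0, w, hwroot, hwim⟩
      have h1 : z₀.im - w.im ≤ |(z₀ - w).im| := by
        rw [Complex.sub_im]
        exact le_abs_self _
      have h2 : |(z₀ - w).im| ≤ ‖z₀ - w‖ := by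
        exact Complex.abs_im_le_norm _
      have : ε < z₀.im - w.im := by
        rw [hε]; linarith
      linarith
    have hnear := near_bound (WW p x d a Complex.I σ') (WW_ne_zero hC0 Complex.I σ') z₀ ε
      (le_of_lt hεpos) hroots
    rw [leadingCoeff_WW hC0, natDegree_WW hC0] at hnear
    have := hδ (show dist σ' σ₀ < δ by rwa [Real.dist_eq])
    rw [hκdef] at this
    linarith
  have hclosed : IsClosed T := by
    apply IsSeqClosed.isClosed
    intro σs σL hmems htends
    choose hσs zs hzs hims using hmems
    have hcompact : IsCompact (insert σL (Set.range σs)) := htends.isCompact_insert_range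
    have hcontf : ContinuousOn
        (fun σ' : ℝ => fun m : Fin (D + 1) => (WW p x d a Complex.I σ').coeff m)
        (insert σL (Set.range σs)) :=
      (continuous_pi fun m : Fin (D + 1) => hcoeff m).continuousOn
    obtain ⟨M, hM⟩ := hcompact.exists_bound_of_continuousOn hcontf
    set R := max 1 ((D : ℝ) * M / ‖((MvPolynomial.eval (fun i => x i + d i) p : ℝ) : ℂ)‖) with hR
    have hzb : ∀ m, zs m ∈ Metric.closedBall (0 : ℂ) R := by
      intro m
      rw [Metric.mem_closedBall, dist_zero_right]
      have hcoeffD : (WW p x d a Complex.I (σs m)).coeff D =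
          ((MvPolynomial.eval (fun i => x i + d i) p : ℝ) : ℂ) := coeff_WW_D _ _
      have hMk : ∀ k, k < D → ‖(WW p x d a Complex.I (σs m)).coeff k‖ ≤ M := by
        intro k hk
        have hmemK : σs m ∈ insert σL (Set.range σs) :=
          Set.mem_insert_of_mem _ (Set.mem_range_self m)
        have hb1 := hM _ hmemK
        have h2 := norm_le_pi_norm
          (fun m' : Fin (D + 1) => (WW p x d a Complex.I (σs m)).coeff m') ⟨k, by omega⟩
        exact le_trans h2 hb1
      have hrb := root_bound _ D (natDegree_WW hC0 _ _) M hMk (zs m) (hzs m)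
        (by rw [hcoeffD]; exact hC0c)
      rw [hcoeffD] at hrb
      exact hrb
    obtain ⟨zL, hzLmem, φ, hφ, hφtend⟩ :=
      (ProperSpace.isCompact_closedBall (0 : ℂ) R).tendsto_subseq hzb
    have hzLim : 0 ≤ zL.im :=
      ge_of_tendsto ((Complex.continuous_im.tendsto zL).comp hφtend)
        (Filter.Eventually.of_forall fun m => hims (φ m))
    have hσL0 : 0 ≤ σL :=
      ge_of_tendsto htends (Filter.Eventually.of_forall fun m => hσs m)
    have hG : Continuous fun q : ℝ × ℂ =>
        ∑ k ∈ range (D + 1), (WW p x d a Complex.I q.1).coeff k * q.2 ^ k :=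
      continuous_finset_sum _ fun k _ =>
        ((hcoeff k).comp continuous_fst).mul (continuous_snd.pow k)
    have hGev : ∀ m, (∑ k ∈ range (D + 1),
        (WW p x d a Complex.I (σs (φ m))).coeff k * (zs (φ m)) ^ k) = 0 := by
      intro m
      rw [← Polynomial.eval_eq_sum_range' (by rw [natDegree_WW hC0]; omega)]
      exact hzs (φ m)
    have hprod : Filter.Tendsto (fun m => (σs (φ m), zs (φ m))) Filter.atTop
        (nhds (σL, zL)) :=
      Filter.Tendsto.prodMk_nhds (htends.comp hφ.tendsto_atTop) hφtend
    have hlim : (∑ k ∈ range (D + 1), (WW p x d a Complex.I σL).coeff k * zL ^ k) = 0 := by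
      have h1 := (hG.tendsto (σL, zL)).comp hprod
      have h2 : Filter.Tendsto (fun m => (∑ k ∈ range (D + 1),
          (WW p x d a Complex.I (σs (φ m))).coeff k * (zs (φ m)) ^ k)) Filter.atTop (nhds 0) := by
        simp only [hGev]
        exact tendsto_const_nhds
      exact tendsto_nhds_unique h1 h2
    refine ⟨hσL0, zL, ?_, hzLim⟩
    rw [Polynomial.eval_eq_sum_range' (by rw [natDegree_WW hC0]; omega : (WW p x d a Complex.I σL).natDegree < D + 1)]
    exact hlim
  by_contra hne
  have hnonempty : T.Nonempty := Set.nonempty_iff_ne_empty.mpr hne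
  have hbdd : BddBelow T := ⟨0, fun t ht => ht.1⟩
  have hmemInf := hclosed.csInf_mem hnonempty hbdd
  obtain ⟨δ, hδpos, hstep⟩ := hopen _ hmemInf
  have hInfpos : 0 < sInf T := by
    rcases lt_or_eq_of_le hmemInf.1 with h | h
    · exact h
    · exfalso
      obtain ⟨_, w, hw, hwim⟩ := hmemInf
      rw [← h] at hw
      exact absurd (anchor hRZ hseg w hw) (not_lt.mpr hwim)
  set σ₁ := max 0 (sInf T - δ / 2) with hσ₁
  have h1 : 0 ≤ σ₁ := le_max_left _ _
  have hle : σ₁ ≤ sInf T := max_le (le_of_lt hInfpos) (by linarith)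
  have hcases : σ₁ = 0 ∧ sInf T ≤ δ / 2 ∨ σ₁ = sInf T - δ / 2 := by
    rcases le_or_gt (sInf T - δ / 2) 0 with h | h
    · exact Or.inl ⟨max_eq_left h, by linarith⟩
    · exact Or.inr (max_eq_right (le_of_lt h))
  have habs : |σ₁ - sInf T| < δ := by
    rw [abs_of_nonpos (by linarith)]
    rcases hcases with ⟨h2, h3⟩ | h2
    · rw [h2]; linarith
    · rw [h2]; linarith
  have hmem1 := hstep σ₁ h1 habs
  have hge : sInf T ≤ σ₁ := csInf_le hbdd hmem1
  have hlt : σ₁ < sInf T := by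
    rcases hcases with ⟨h2, _⟩ | h2
    · rw [h2]; exact hInfpos
    · rw [h2]; linarith
  linarith


include hRZ hseg in
lemma q_root_neg (s : ℝ) (hs : 0 < s) (t : ℂ)
    (ht : (WW p x d a (Complex.I * (s : ℂ)) 1).eval t = 0) : t.im < 0 := by
  have hsc : ((s : ℂ)) ≠ 0 := by exact_mod_cast ne_of_gt hs
  have key : (WW p x d a (Complex.I * (s : ℂ)) 1).eval t =
      (s : ℂ) ^ D * (WW p x d a Complex.I (1 / s)).eval (t / s) := by
    rw [eval_WW, eval_WW, Finset.mul_sum]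
    refine Finset.sum_congr rfl fun j hj => ?_
    rw [Finset.mul_sum]
    refine Finset.sum_congr rfl fun k hk => ?_
    by_cases hb : bc p x d a j k = 0
    · simp [hb]
    · have hjk := bc_support p x d a j k hb
      have hsplit : (s : ℂ) ^ D = (s : ℂ) ^ j * (s : ℂ) ^ k * (s : ℂ) ^ (D - j - k) := by
        rw [← pow_add, ← pow_add]; congr 1; omega
      rw [hsplit]
      push_cast
      field_simp
      simp only [div_pow, one_pow]; field_simp
  rw [key] at ht
  have h2 : (WW p x d a Complex.I (1 / s)).eval (t / s) = 0 := by
    rcases mul_eq_zero.mp ht with h | h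
    · exact absurd h (pow_ne_zero _ hsc)
    · exact h
  have h3 := no_bad hRZ hseg (1 / s) (by positivity) _ h2
  have h4 : t.im = s * (t / s).im := by
    conv_lhs => rw [show t = (s : ℂ) * (t / s) by field_simp]
    rw [Complex.mul_im]
    simp
  rw [h4]
  exact mul_neg_of_pos_of_neg hs h3

include hRZ hseg in
lemma q0_im_nonpos (z : ℂ) (hz : (WW p x d a 0 1).eval z = 0) : z.im ≤ 0 := by
  have hC0 : MvPolynomial.eval (fun i => x i + d i) p ≠ 0 := hc0' hseg
  have hC0c : ((MvPolynomial.eval (fun i => x i + d i) p : ℝ) : ℂ) ≠ 0 := by exact_mod_cast hC0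
  by_contra hpos
  push_neg at hpos
  set ε := z.im with hε
  set κ := ‖((MvPolynomial.eval (fun i => x i + d i) p : ℝ) : ℂ)‖ * ε ^ D with hκdef
  have hκ : 0 < κ := mul_pos (norm_pos_iff.mpr hC0c) (pow_pos hpos _)
  have hcont : Continuous fun s : ℝ => (WW p x d a (Complex.I * (s : ℂ)) 1).eval z := by
    simp only [eval_WW]
    refine continuous_finset_sum _ fun j _ => continuous_finset_sum _ fun k _ => ?_
    exact continuous_const.mul (continuous_const.mul
      ((continuous_const.add (continuous_const.mul Complex.continuous_ofReal)).pow _))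
  have hval0 : (WW p x d a (Complex.I * ((0 : ℝ) : ℂ)) 1).eval z = 0 := by
    rw [show Complex.I * ((0 : ℝ) : ℂ) = 0 by simp]
    exact hz
  have htend0 : Filter.Tendsto (fun s : ℝ => ‖(WW p x d a (Complex.I * (s : ℂ)) 1).eval z‖)
      (nhds 0) (nhds 0) := by
    have h3 := (hcont.norm).tendsto 0
    rwa [hval0, norm_zero] at h3
  have hev : ∀ᶠ s : ℝ in nhds 0, ‖(WW p x d a (Complex.I * (s : ℂ)) 1).eval z‖ < κ :=
    htend0.eventually (gt_mem_nhds hκ)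
  obtain ⟨δ, hδpos, hδ⟩ := Metric.eventually_nhds_iff.mp hev
  set s := δ / 2 with hs
  have hspos : 0 < s := by positivity
  have hsmall : ‖(WW p x d a (Complex.I * (s : ℂ)) 1).eval z‖ < κ := by
    refine hδ ?_
    rw [Real.dist_eq, sub_zero, abs_of_pos hspos]
    rw [hs]; linarith
  set F := WW p x d a (Complex.I * (s : ℂ)) 1 with hF
  have hFne : F ≠ 0 := WW_ne_zero hC0 _ _
  have hnearroot : ∃ w ∈ F.roots, ‖z - w‖ < ε := by
    by_contra hcon
    push_neg at hcon
    have hnb := near_bound F hFne z ε (le_of_lt hpos) hcon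
    rw [leadingCoeff_WW hC0, natDegree_WW hC0] at hnb
    rw [hκdef] at hsmall
    linarith
  obtain ⟨w, hwmem, hwnear⟩ := hnearroot
  have hweval : F.eval w = 0 := (Polynomial.mem_roots hFne).mp hwmem
  have hwim : w.im < 0 := q_root_neg hRZ hseg s hspos w hweval
  have h1 : z.im - w.im ≤ ‖z - w‖ := by
    have ha : z.im - w.im ≤ |(z - w).im| := by
      rw [Complex.sub_im]; exact le_abs_self _
    have hb2 : |(z - w).im| ≤ ‖z - w‖ := by
      exact Complex.abs_im_le_norm _
    linarith
  rw [hε] at *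
  linarith

include hRZ hseg in
lemma q0_roots_real (z : ℂ) (hz : (WW p x d a 0 1).eval z = 0) : z.im = 0 := by
  have h1 := q0_im_nonpos hRZ hseg z hz
  have hconj : (WW p x d a 0 1).eval ((starRingEnd ℂ) z) = 0 := by
    have hcalc : (WW p x d a 0 1).eval ((starRingEnd ℂ) z) =
        (starRingEnd ℂ) ((WW p x d a 0 1).eval z) := by
      rw [eval_WW, eval_WW, map_sum]
      refine Finset.sum_congr rfl fun j _ => ?_
      rw [map_sum]
      refine Finset.sum_congr rfl fun k _ => ?_
      simp only [map_mul, map_pow, map_add, Complex.conj_ofReal, map_zero]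
    rw [hcalc, hz, map_zero]
  have h2 := q0_im_nonpos hRZ hseg _ hconj
  simp only [Complex.conj_im] at h2
  linarith

include hRZ hseg in
lemma segment_conclusion (z : ℂ) (hz : z.im ≠ 0) :
    E p (fun i => (x i : ℂ) + (d i : ℂ) + z * (a i : ℂ)) ≠ 0 := by
  intro h0
  have hz0 : z ≠ 0 := fun h => hz (by rw [h]; simp)
  have hb := bridge p x d a 1 z
  rw [show (fun i => (x i : ℂ) + (d i : ℂ) * 1 + (a i : ℂ) * z) =
    (fun i => (x i : ℂ) + (d i : ℂ) + z * (a i : ℂ)) from funext fun i => by ring] at hb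
  rw [E] at h0 hb
  rw [h0] at hb
  have hsum : ∑ j ∈ range (D + 1), ∑ k ∈ range (D + 1),
      (bc p x d a j k : ℂ) * 1 ^ j * z ^ k = 0 := hb.symm
  have hq0 : (WW p x d a 0 1).eval (z⁻¹) = 0 := by
    rw [eval_WW]
    have hstep : ∑ j ∈ range (D + 1), ∑ k ∈ range (D + 1),
        (bc p x d a j k : ℂ) * ((1 : ℝ) : ℂ) ^ k * ((z⁻¹) ^ j * (z⁻¹ + 0) ^ (D - j - k)) =
        (z⁻¹) ^ D * ∑ j ∈ range (D + 1), ∑ k ∈ range (D + 1),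
          (bc p x d a j k : ℂ) * 1 ^ j * z ^ k := by
      rw [Finset.mul_sum]
      refine Finset.sum_congr rfl fun j hj => ?_
      rw [Finset.mul_sum]
      refine Finset.sum_congr rfl fun k hk => ?_
      by_cases hbz : bc p x d a j k = 0
      · simp [hbz]
      · have hjk := bc_support p x d a j k hbz
        have hsplit : (z⁻¹ : ℂ) ^ D = (z⁻¹) ^ j * (z⁻¹) ^ k * (z⁻¹) ^ (D - j - k) := by
          rw [← pow_add, ← pow_add]; congr 1; omega
        rw [hsplit]
        field_simp
        simp only [mul_zero, add_zero, div_pow, one_pow]; field_simp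
        simp
    rw [hstep, hsum, mul_zero]
  have hreal := q0_roots_real hRZ hseg _ hq0
  rw [Complex.inv_im] at hreal
  have hns : Complex.normSq z ≠ 0 := by rwa [Ne, Complex.normSq_eq_zero]
  rcases _root_.div_eq_zero_iff.mp hreal with h | h
  · exact hz (neg_eq_zero.mp h)
  · exact hns h

end wD
end Seg

section Assemble
open RZAux RZAux.Fam

def TransRZ {n : ℕ} (p : MvPolynomial (Fin n) ℝ) (x : Fin n → ℝ) : Prop :=
  MvPolynomial.eval x p ≠ 0 ∧
    ∀ (v : Fin n → ℝ) (z : ℂ), z.im ≠ 0 →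
      MvPolynomial.aeval (fun i => (x i : ℂ) + z * (v i : ℂ)) p ≠ 0

lemma transRZ_step {n : ℕ} {p : MvPolynomial (Fin n) ℝ} {x x' : Fin n → ℝ} (hx : TransRZ p x)
    (hseg : ∀ μ : ℝ, 0 ≤ μ → μ ≤ 1 →
      MvPolynomial.eval (fun i => x i + μ * (x' i - x i)) p ≠ 0) :
    TransRZ p x' := by
  have hRZ : ∀ (v : Fin n → ℝ) (z : ℂ), z.im ≠ 0 →
      E p (fun i => (x i : ℂ) + z * (v i : ℂ)) ≠ 0 := hx.2
  constructor
  · have h1 := hseg 1 zero_le_one le_rfl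
    have h2 : (fun i => x i + 1 * (x' i - x i)) = x' := funext fun i => by ring
    rwa [h2] at h1
  · intro v z hz
    have hc := segment_conclusion (p := p) (x := x) (d := fun i => x' i - x i) (a := v)
      hRZ hseg z hz
    intro h0
    apply hc
    have hfun : (fun i => ((x i : ℂ)) + (((x' i - x i : ℝ)) : ℂ) + z * (v i : ℂ)) =
        (fun i => ((x' i : ℂ)) + z * (v i : ℂ)) := by
      funext i
      push_cast
      ring
    simp only [RZAux.E]
    rw [hfun, h0]

lemma lineRestrict_aeval {n : ℕ} (p : MvPolynomial (Fin n) ℝ) (v : Fin n → ℝ) (z : ℂ) :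
    Polynomial.aeval z (lineRestrict p v) =
      MvPolynomial.aeval (fun i => (v i : ℂ) * z) p := by
  rw [lineRestrict]
  have h := AlgHom.congr_fun (MvPolynomial.comp_aeval
    (f := fun i => Polynomial.C (v i) * Polynomial.X)
    (Polynomial.aeval z : Polynomial ℝ →ₐ[ℝ] ℂ)) p
  rw [AlgHom.comp_apply] at h
  rw [h]
  have hfun : (fun i => (Polynomial.aeval z) (Polynomial.C (v i) * Polynomial.X)) =
      (fun i => ((v i : ℂ)) * z) := by
    funext i
    simp
  rw [hfun]

lemma transRZ_zero {n : ℕ} {p : MvPolynomial (Fin n) ℝ} (hp : IsRealZero p) : TransRZ p 0 := by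
  constructor
  · exact hp.1
  · intro v z hz h0
    apply hz
    apply hp.2 v z
    rw [lineRestrict_aeval]
    have hfun : (fun i => ((v i : ℂ)) * z) =
        (fun i => (((0 : Fin n → ℝ) i : ℝ) : ℂ) + z * (v i : ℂ)) := by
      funext i
      simp [mul_comm]
    rw [hfun]
    exact h0

lemma continuous_mv_eval {n : ℕ} (p : MvPolynomial (Fin n) ℝ) :
    Continuous fun v : Fin n → ℝ => MvPolynomial.eval v p := by
  induction p using MvPolynomial.induction_on with
  | C r => simpa using continuous_const
  | add f g hf hg => simp only [map_add]; exact hf.add hg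
  | mul_X f i hf => simp only [map_mul, MvPolynomial.eval_X]; exact hf.mul (continuous_apply i)

lemma transRZ_of_mem_component {n : ℕ} {p : MvPolynomial (Fin n) ℝ} (hp : IsRealZero p)
    {x₀ : Fin n → ℝ}
    (hx₀ : x₀ ∈ connectedComponentIn {x : Fin n → ℝ | MvPolynomial.eval x p ≠ 0} 0) :
    TransRZ p x₀ := by
  set S : Set (Fin n → ℝ) := {x | MvPolynomial.eval x p ≠ 0} with hS
  have hSopen : IsOpen S := isOpen_compl_singleton.preimage (continuous_mv_eval p)
  have h0S : (0 : Fin n → ℝ) ∈ S := hp.1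
  -- segment inside a ball
  have hsegball : ∀ (c : Fin n → ℝ) (ε : ℝ), ∀ y ∈ Metric.ball c ε, ∀ x' ∈ Metric.ball c ε,
      ∀ μ : ℝ, 0 ≤ μ → μ ≤ 1 → (fun i => y i + μ * (x' i - y i)) ∈ Metric.ball c ε := by
    intro c ε y hy x' hx' μ hμ0 hμ1
    have hconv := convex_ball c ε
    have h2 := hconv hy hx' (by linarith : (0:ℝ) ≤ 1 - μ) hμ0 (by ring : (1 - μ) + μ = 1)
    have h3 : (1 - μ) • y + μ • x' = fun i => y i + μ * (x' i - y i) := by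
      funext i
      simp only [Pi.add_apply, Pi.smul_apply, smul_eq_mul]
      ring
    rwa [h3] at h2
  set U : Set (Fin n → ℝ) := {x | x ∈ S ∧ TransRZ p x} with hU
  set V : Set (Fin n → ℝ) := {x | x ∈ S ∧ ¬ TransRZ p x} with hV
  have hUopen : IsOpen U := by
    rw [Metric.isOpen_iff]
    rintro y ⟨hyS, hyT⟩
    obtain ⟨ε, hε, hball⟩ := Metric.isOpen_iff.mp hSopen y hyS
    refine ⟨ε, hε, fun x' hx' => ⟨hball hx', ?_⟩⟩
    refine transRZ_step hyT fun μ hμ0 hμ1 => ?_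
    exact hball (hsegball y ε y (Metric.mem_ball_self hε) x' hx' μ hμ0 hμ1)
  have hVopen : IsOpen V := by
    rw [Metric.isOpen_iff]
    rintro y ⟨hyS, hyT⟩
    obtain ⟨ε, hε, hball⟩ := Metric.isOpen_iff.mp hSopen y hyS
    refine ⟨ε, hε, fun x' hx' => ⟨hball hx', fun hx'T => hyT ?_⟩⟩
    refine transRZ_step hx'T fun μ hμ0 hμ1 => ?_
    exact hball (hsegball y ε x' hx' y (Metric.mem_ball_self hε) μ hμ0 hμ1)
  by_contra hbad
  have hpre : IsPreconnected (connectedComponentIn S 0) := isPreconnected_connectedComponentIn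
  have hcover : connectedComponentIn S 0 ⊆ U ∪ V := by
    intro c hc
    by_cases h : TransRZ p c
    · exact Or.inl ⟨connectedComponentIn_subset _ _ hc, h⟩
    · exact Or.inr ⟨connectedComponentIn_subset _ _ hc, h⟩
  have hne1 : (connectedComponentIn S 0 ∩ U).Nonempty :=
    ⟨0, mem_connectedComponentIn h0S, h0S, transRZ_zero hp⟩
  have hne2 : (connectedComponentIn S 0 ∩ V).Nonempty :=
    ⟨x₀, hx₀, connectedComponentIn_subset _ _ hx₀, hbad⟩
  obtain ⟨w, _, hwU, hwV⟩ := hpre U V hUopen hVopen hcover hne1 hne2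
  exact hwV.2 hwU.2

end Assemble


lemma aeval_eq_eval' {n : ℕ} (v : Fin n → ℝ) (p' : MvPolynomial (Fin n) ℝ) :
    MvPolynomial.aeval v p' = MvPolynomial.eval v p' := rfl

/-- Translating a real zero polynomial by a point `x₀` of the connected component
of `0` in its nonvanishing set yields again a real zero polynomial, whose
component of `0` is the translate by `-x₀` of the original component. -/
theorem realZero_translate {n : ℕ} (p : MvPolynomial (Fin n) ℝ) (hp : IsRealZero p)
    (x₀ : Fin n → ℝ)
    (hx₀ : x₀ ∈ connectedComponentIn {x : Fin n → ℝ | MvPolynomial.eval x p ≠ 0} 0)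
    (q : MvPolynomial (Fin n) ℝ)
    (hq : q = MvPolynomial.aeval (fun i => MvPolynomial.X i + MvPolynomial.C (x₀ i)) p) :
    IsRealZero q ∧
      connectedComponentIn {x : Fin n → ℝ | MvPolynomial.eval x q ≠ 0} 0 =
        (fun x => x - x₀) '' connectedComponentIn {x : Fin n → ℝ | MvPolynomial.eval x p ≠ 0} 0 := by
  have hgood : TransRZ p x₀ := transRZ_of_mem_component hp hx₀
  have heval : ∀ v : Fin n → ℝ,
      MvPolynomial.eval v q = MvPolynomial.eval (fun i => v i + x₀ i) p := by
    intro v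
    rw [hq]
    have h := AlgHom.congr_fun (MvPolynomial.comp_aeval
      (f := fun i => MvPolynomial.X i + MvPolynomial.C (x₀ i))
      (MvPolynomial.aeval v : MvPolynomial (Fin n) ℝ →ₐ[ℝ] ℝ)) p
    rw [AlgHom.comp_apply] at h
    have hfun : (fun i => MvPolynomial.aeval v (MvPolynomial.X i + MvPolynomial.C (x₀ i))) =
        (fun i => v i + x₀ i) := by
      funext i
      simp
    rw [← aeval_eq_eval' v, h, hfun, aeval_eq_eval']
  have hq1 : IsRealZero q := by
    constructor
    · have hz0 : (fun i => (0 : Fin n → ℝ) i + x₀ i) = x₀ := funext fun i => by simp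
      rw [heval 0, hz0]
      exact hgood.1
    · intro b z h0
      by_contra hz
      apply hgood.2 b z hz
      rw [lineRestrict_aeval, hq] at h0
      have h := AlgHom.congr_fun (MvPolynomial.comp_aeval
        (f := fun i => MvPolynomial.X i + MvPolynomial.C (x₀ i))
        (MvPolynomial.aeval (fun i => (b i : ℂ) * z) :
          MvPolynomial (Fin n) ℝ →ₐ[ℝ] ℂ)) p
      rw [AlgHom.comp_apply] at h
      rw [h] at h0
      have hfun : (fun i => MvPolynomial.aeval (fun i' => ((b i' : ℂ)) * z)
          (MvPolynomial.X i + MvPolynomial.C (x₀ i))) =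
          (fun i => ((x₀ i : ℂ)) + z * ((b i : ℂ))) := by
        funext i
        simp
        ring
      rw [hfun] at h0
      exact h0
  refine ⟨hq1, ?_⟩
  set S : Set (Fin n → ℝ) := {x | MvPolynomial.eval x p ≠ 0} with hS
  set e : (Fin n → ℝ) ≃ₜ (Fin n → ℝ) := Homeomorph.addRight x₀ with he
  have hx₀S : x₀ ∈ S := connectedComponentIn_subset _ _ hx₀
  have hSq : {x : Fin n → ℝ | MvPolynomial.eval x q ≠ 0} = e ⁻¹' S := by
    ext v
    simp only [Set.mem_setOf_eq, Set.mem_preimage, he, Homeomorph.coe_addRight]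
    rw [heval v]
    rfl
  have h1 : connectedComponentIn S 0 = connectedComponentIn S x₀ := connectedComponentIn_eq hx₀
  have himg := Homeomorph.image_connectedComponentIn e.symm hx₀S
  have hsymmfun : ⇑e.symm = fun v : Fin n → ℝ => v - x₀ := by
    funext v
    apply e.injective
    rw [Homeomorph.apply_symm_apply]
    simp [he]
  have hsymmS : e.symm '' S = {x : Fin n → ℝ | MvPolynomial.eval x q ≠ 0} := by
    rw [Homeomorph.image_symm, hSq]
  have hsymm0 : e.symm x₀ = 0 := by
    rw [congrFun hsymmfun x₀]
    simp
  rw [hsymmS, hsymm0] at himg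
  rw [h1, ← hsymmfun, himg]
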